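/- The bias bound in Proposition 1 is tight up to constants in the following sense: for any γ ∈ (0,1] there exist a distribution of x with centered covariance having smallest eigenvalue γ² and a bias function b with |b(x)| ≤ δ such that the population least squares slope error satisfies ||β̂_{1:p} - β̄_{1:p}||₂ ≥ c·δ/γ for an absolute constant c > 0. -/

import Mathlib

open MeasureTheory ProbabilityTheory ENNReal

lemma my_integrable_dirac {α F : Type*} [MeasurableSpace α] [MeasurableSingletonClass α]
    [NormedAddCommGroup F] (f : α → F) (a : α) (hf : StronglyMeasurable f) :
    Integrable f (Measure.dirac a) := by
  refine ⟨hf.aestronglyMeasurable, ?_⟩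
  rw [HasFiniteIntegral, lintegral_dirac]
  exact ENNReal.coe_lt_top

lemma my_integral_two_point {α F : Type*} [MeasurableSpace α] [MeasurableSingletonClass α]
    [NormedAddCommGroup F] [NormedSpace ℝ F] [CompleteSpace F]
    (f : α → F) (a b : α) (hf : StronglyMeasurable f) :
    ∫ x, f x ∂((2⁻¹ : ℝ≥0∞) • Measure.dirac a + (2⁻¹ : ℝ≥0∞) • Measure.dirac b) =
      (2 : ℝ)⁻¹ • f a + (2 : ℝ)⁻¹ • f b := by
  rw [integral_add_measure ((my_integrable_dirac f a hf).smul_measure (by simp))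
      ((my_integrable_dirac f b hf).smul_measure (by simp)),
    integral_smul_measure, integral_smul_measure, integral_dirac, integral_dirac]
  norm_num

/-- Tightness of the bias bound: there is an absolute constant `c > 0` such that for any
`γ ∈ (0,1]` and `δ > 0` there are a distribution of `x` whose centered covariance has
smallest eigenvalue `γ²`, a bias `b` with `|b(x)| ≤ δ`, and a population least squares
solution whose slope error is at least `c·δ/γ`. -/
theorem stmt_3 :
    ∃ c : ℝ, 0 < c ∧
      ∀ γ δ : ℝ, 0 < γ → γ ≤ 1 → 0 < δ →
        ∃ (p : ℕ) (μ : Measure (EuclideanSpace ℝ (Fin p)))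
          (_ : IsProbabilityMeasure μ)
          (b : EuclideanSpace ℝ (Fin p) → ℝ)
          (bbar1 : EuclideanSpace ℝ (Fin p)) (bbar0 : ℝ)
          (bhat1 : EuclideanSpace ℝ (Fin p)) (bhat0 : ℝ),
          -- the bias is uniformly bounded by δ
          (∀ x, |b x| ≤ δ) ∧
          -- γ² is the smallest eigenvalue of the centered covariance matrix of x
          (∀ v : EuclideanSpace ℝ (Fin p), ‖v‖ = 1 →
            γ ^ 2 ≤ ∫ x, (inner ℝ v (x - ∫ x', x' ∂μ) : ℝ) ^ 2 ∂μ) ∧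
          (∃ v : EuclideanSpace ℝ (Fin p), ‖v‖ = 1 ∧
            γ ^ 2 = ∫ x, (inner ℝ v (x - ∫ x', x' ∂μ) : ℝ) ^ 2 ∂μ) ∧
          -- β̂ is the population least squares solution for y = xᵀβ̄ + β̄₀ + b(x)
          (∀ (β₁ : EuclideanSpace ℝ (Fin p)) (β₀ : ℝ),
            ∫ x, ((inner ℝ x bhat1 : ℝ) + bhat0 -
                ((inner ℝ x bbar1 : ℝ) + bbar0 + b x)) ^ 2 ∂μ ≤
              ∫ x, ((inner ℝ x β₁ : ℝ) + β₀ -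
                ((inner ℝ x bbar1 : ℝ) + bbar0 + b x)) ^ 2 ∂μ) ∧
          -- the slope error is at least c·δ/γ
          c * δ / γ ≤ ‖bhat1 - bbar1‖ := by
  refine ⟨1, one_pos, fun γ δ hγ hγ1 hδ => ?_⟩
  set E := EuclideanSpace ℝ (Fin 1)
  set a : E := EuclideanSpace.single 0 γ with ha
  set μ : Measure E := (2⁻¹ : ℝ≥0∞) • Measure.dirac a + (2⁻¹ : ℝ≥0∞) • Measure.dirac (-a)
    with hμ
  have hprob : IsProbabilityMeasure μ := by
    constructor
    simp [hμ]
    rw [← ENNReal.inv_two_add_inv_two]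
  -- the bias function
  set b : E → ℝ := fun x => δ * (max (-1) (min 1 (x 0 / γ))) with hb
  have hba : b a = δ := by
    simp [hb, ha, EuclideanSpace.single_apply, div_self hγ.ne']
  have hbna : b (-a) = -δ := by
    have : (-a) 0 = -γ := by
      show -(a 0) = -γ
      simp [ha, EuclideanSpace.single_apply]
    simp only [hb, this]
    rw [neg_div, div_self hγ.ne']
    rw [min_eq_right (by linarith), max_eq_left (by linarith)]
    ring
  set bhat1 : E := EuclideanSpace.single 0 (δ / γ) with hbh
  have hinner_a : (inner ℝ a bhat1 : ℝ) = δ := by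
    rw [ha, hbh, EuclideanSpace.inner_single_left]
    simp [EuclideanSpace.single_apply]
    rw [mul_comm, div_mul_cancel₀ _ hγ.ne']
  have hinner_na : (inner ℝ (-a) bhat1 : ℝ) = -δ := by
    rw [inner_neg_left, hinner_a]
  -- mean is zero
  have hmean : (∫ x', x' ∂μ) = (0 : E) := by
    rw [hμ]
    have h := my_integral_two_point (fun x : E => x) a (-a) stronglyMeasurable_id
    simpa using h
  refine ⟨1, μ, hprob, b, 0, 0, bhat1, 0, ?_, ?_, ?_, ?_, ?_⟩
  · intro x
    rw [hb, abs_mul, abs_of_pos hδ]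
    have h1 : |max (-1) (min 1 (x 0 / γ))| ≤ 1 := by
      rw [abs_le]
      constructor
      · exact le_max_left _ _
      · exact max_le (by norm_num) (min_le_left _ _)
    nlinarith [hδ.le]
  · intro v hv
    have hv0 : (v 0) ^ 2 = 1 := by
      have h := hv
      rw [EuclideanSpace.norm_eq] at h
      have h2 := congrArg (· ^ 2) h
      simp only [one_pow] at h2
      rw [Real.sq_sqrt (by positivity)] at h2
      simpa [Fin.sum_univ_one, sq_abs] using h2
    have hcont : StronglyMeasurable (fun x : E => (inner ℝ v (x - (0:E)) : ℝ) ^ 2) :=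
      ((Continuous.inner continuous_const (continuous_id.sub continuous_const)).pow 2).stronglyMeasurable
    rw [hmean, hμ, my_integral_two_point _ a (-a) hcont]
    have h1 : (inner ℝ v (a - (0:E)) : ℝ) = v 0 * γ := by
      simp [ha, EuclideanSpace.inner_single_right, mul_comm]
    have h2 : (inner ℝ v ((-a) - (0:E)) : ℝ) = -(v 0 * γ) := by
      simp [ha, EuclideanSpace.inner_single_right, mul_comm]
    rw [h1, h2]
    simp only [smul_eq_mul]
    nlinarith
  · refine ⟨EuclideanSpace.single 0 1, ?_, ?_⟩
    · simp [EuclideanSpace.norm_single]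
    · have hcont : StronglyMeasurable
          (fun x : E => (inner ℝ (EuclideanSpace.single (0 : Fin 1) (1:ℝ)) (x - (0:E)) : ℝ) ^ 2) :=
        ((Continuous.inner continuous_const (continuous_id.sub continuous_const)).pow 2).stronglyMeasurable
      rw [hmean, hμ, my_integral_two_point _ a (-a) hcont]
      have h1 : (inner ℝ (EuclideanSpace.single (0 : Fin 1) (1:ℝ)) (a - (0:E)) : ℝ) = γ := by
        simp [ha, EuclideanSpace.inner_single_right, EuclideanSpace.single_apply]
      have h2 : (inner ℝ (EuclideanSpace.single (0 : Fin 1) (1:ℝ)) ((-a) - (0:E)) : ℝ) = -γ := by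
        simp [ha, EuclideanSpace.inner_single_right, EuclideanSpace.single_apply]
      rw [h1, h2]
      simp only [smul_eq_mul]
      ring
  · intro β₁ β₀
    have hLHS : ∫ x, ((inner ℝ x bhat1 : ℝ) + 0 - ((inner ℝ x (0:E) : ℝ) + 0 + b x)) ^ 2 ∂μ = 0 := by
      have hcont : StronglyMeasurable
          (fun x : E => ((inner ℝ x bhat1 : ℝ) + 0 - ((inner ℝ x (0:E) : ℝ) + 0 + b x)) ^ 2) := by
        have hb_cont : Continuous b := by
          rw [hb]
          exact continuous_const.mul ((continuous_const.max (continuous_const.min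
            (((continuous_apply (0 : Fin 1)).comp (PiLp.continuous_ofLp 2 (fun _ : Fin 1 => ℝ)) : Continuous fun x : EuclideanSpace ℝ (Fin 1) => x 0).div_const γ))))
        exact (((((Continuous.inner continuous_id continuous_const).add continuous_const).sub
          (((Continuous.inner continuous_id continuous_const).add continuous_const).add
            hb_cont)).pow 2)).stronglyMeasurable
      rw [hμ, my_integral_two_point _ a (-a) hcont]
      simp [hinner_a, hinner_na, hba, hbna]
    rw [hLHS]
    exact integral_nonneg (fun x => sq_nonneg _)
  · have : ‖bhat1 - 0‖ = δ / γ := by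
      rw [sub_zero, hbh, EuclideanSpace.norm_single, Real.norm_eq_abs, abs_of_pos (div_pos hδ hγ)]
    rw [this, one_mul]
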